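/- Let R be a commutative ring with total quotient ring T. Then the complete integral closure satisfies R̂ = ⋃_{I} (I :_T I), where I ranges over all regular fractional divisorial ideals of R. Moreover, if the conductor (R : R̂) is regular, then R̂ is itself a regular fractional divisorial ideal of R. -/

import Mathlib

open scoped Pointwise

/-- For subsets `Z, X` of the total quotient ring `T`, the colon set
`(Z : X) = {a ∈ T | a X ⊆ Z}`. -/
def colonSet (T : Type*) [CommRing T] (Z X : Set T) : Set T :=
  {a : T | ∀ x ∈ X, a * x ∈ Z}

/-- The image of `R` inside its total quotient ring `T`. -/
def ringSet (R T : Type*) [CommRing R] [CommRing T] [Algebra R T] : Set T :=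
  Set.range (algebraMap R T)

/-- `X⁻¹ = (R : X)` for a subset `X ⊆ T`. -/
def invSet (R T : Type*) [CommRing R] [CommRing T] [Algebra R T] (X : Set T) : Set T :=
  colonSet T (ringSet R T) X

/-- The divisorial (v-) closure `X_v = (X⁻¹)⁻¹` of a subset `X ⊆ T`. -/
def vSet (R T : Type*) [CommRing R] [CommRing T] [Algebra R T] (X : Set T) : Set T :=
  invSet R T (invSet R T X)

/-- The set of regular elements (non-zero-divisors) of `T`. -/
def regSet (T : Type*) [CommRing T] : Set T :=
  {t : T | t ∈ nonZeroDivisors T}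

/-- The colon set computed inside `Q = T^• ` : `(Z :_Q X) = {a ∈ Q | a X ⊆ Z}`. -/
def colonQ (T : Type*) [CommRing T] (Z X : Set T) : Set T :=
  {a : T | a ∈ nonZeroDivisors T ∧ ∀ x ∈ X, a * x ∈ Z}

/-- The monoid `H = R^•` of regular elements of `R`, viewed inside `T`. -/
def HSet (R T : Type*) [CommRing R] [CommRing T] [Algebra R T] : Set T :=
  ringSet R T ∩ regSet T

/-- The v-closure of a subset of `Q = T^•` with respect to the monoid `H = R^•`. -/
def vMon (R T : Type*) [CommRing R] [CommRing T] [Algebra R T] (X : Set T) : Set T :=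
  colonQ T (HSet R T) (colonQ T (HSet R T) X)

/-- `X ⊆ T` is `R`-fractional: `cX ⊆ R` for some regular `c ∈ R^•`. -/
def isFrac (R T : Type*) [CommRing R] [CommRing T] [Algebra R T] (X : Set T) : Prop :=
  ∃ c : R, c ∈ nonZeroDivisors R ∧ ∀ x ∈ X, algebraMap R T c * x ∈ ringSet R T

/-- The complete integral closure `R̂` of `R` in `T`. -/
def hatSet (R T : Type*) [CommRing R] [CommRing T] [Algebra R T] : Set T :=
  {x : T | ∃ c : R, c ∈ nonZeroDivisors R ∧
    ∀ n : ℕ, 1 ≤ n → algebraMap R T c * x ^ n ∈ ringSet R T}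

/-- The complete integral closure `Ĥ` of the monoid `H = R^•` in `q(H) = T^•`. -/
def monHat (R T : Type*) [CommRing R] [CommRing T] [Algebra R T] : Set T :=
  {x : T | x ∈ nonZeroDivisors T ∧
    ∃ c ∈ HSet R T, ∀ n : ℕ, 1 ≤ n → c * x ^ n ∈ HSet R T}

/-- `R` is a v-Marot ring: every regular fractional divisorial ideal is
v-generated by its regular elements. -/
def isVMarot (R T : Type*) [CommRing R] [CommRing T] [Algebra R T] : Prop :=
  ∀ I : Set T, (I ∩ regSet T).Nonempty → isFrac R T I → vSet R T I = I →
    I = vSet R T (I ∩ regSet T)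


section Aux

variable (R T : Type*) [CommRing R] [CommRing T] [Algebra R T]

lemma one_mem_ringSet' : (1 : T) ∈ ringSet R T := ⟨1, map_one _⟩

lemma mul_mem_ringSet' {a b : T} (ha : a ∈ ringSet R T) (hb : b ∈ ringSet R T) :
    a * b ∈ ringSet R T := by
  obtain ⟨x, rfl⟩ := ha; obtain ⟨y, rfl⟩ := hb; exact ⟨x * y, map_mul _ _ _⟩

lemma subset_vSet' (X : Set T) : X ⊆ vSet R T X := fun x hx a ha => by
  rw [mul_comm]; exact ha x hx

lemma invSet_anti' {X Y : Set T} (h : X ⊆ Y) : invSet R T Y ⊆ invSet R T X :=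
  fun a ha x hx => ha x (h hx)

lemma invSet_vSet' (X : Set T) : invSet R T (vSet R T X) = invSet R T X :=
  le_antisymm (invSet_anti' R T (subset_vSet' R T X)) (subset_vSet' R T (invSet R T X))

lemma mul_stable_invSet' {X : Set T} {x : T} (h : ∀ i ∈ X, x * i ∈ X) :
    ∀ a ∈ invSet R T X, x * a ∈ invSet R T X := fun a ha i hi => by
  have h2 : a * (x * i) ∈ ringSet R T := ha _ (h i hi)
  rwa [show x * a * i = a * (x * i) by ring]

lemma invSet_ringSet' : invSet R T (ringSet R T) = ringSet R T := by
  apply le_antisymm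
  · intro a ha
    have := ha 1 (one_mem_ringSet' R T)
    rwa [mul_one] at this
  · intro a ha b hb
    exact mul_mem_ringSet' R T ha hb

variable [IsFractionRing R T]

lemma algMap_reg' {c : R} (hc : c ∈ nonZeroDivisors R) :
    algebraMap R T c ∈ nonZeroDivisors T :=
  (IsLocalization.map_units T ⟨c, hc⟩).mem_nonZeroDivisors

lemma reg_of_image' {c : R} (h : algebraMap R T c ∈ nonZeroDivisors T) :
    c ∈ nonZeroDivisors R := by
  rw [mem_nonZeroDivisors_iff_right]
  intro y hy
  have h1 : algebraMap R T y * algebraMap R T c = 0 := by rw [← map_mul, hy, map_zero]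
  have h2 : algebraMap R T y = 0 := (mem_nonZeroDivisors_iff_right.mp h) _ h1
  exact IsFractionRing.injective R T (by rw [h2, map_zero])

lemma one_mem_hatSet' : (1 : T) ∈ hatSet R T :=
  ⟨1, one_mem _, fun n _ => by
    simpa using one_mem_ringSet' R T⟩

lemma hat_mul' {x y : T} (hx : x ∈ hatSet R T) (hy : y ∈ hatSet R T) :
    x * y ∈ hatSet R T := by
  obtain ⟨c, hc, hcx⟩ := hx
  obtain ⟨e, he, hey⟩ := hy
  refine ⟨c * e, mul_mem hc he, fun n hn => ?_⟩
  have : algebraMap R T (c * e) * (x * y) ^ n =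
      (algebraMap R T c * x ^ n) * (algebraMap R T e * y ^ n) := by
    rw [map_mul, mul_pow]; ring
  rw [this]
  exact mul_mem_ringSet' R T (hcx n hn) (hey n hn)

end Aux

theorem stmt18 (R T : Type*) [CommRing R] [CommRing T] [Algebra R T] [IsFractionRing R T] :
    hatSet R T = ⋃₀ {S : Set T | ∃ I : Set T, (I ∩ regSet T).Nonempty ∧ isFrac R T I ∧
        vSet R T I = I ∧ S = colonSet T I I} ∧
      ((colonSet T (ringSet R T) (hatSet R T) ∩ regSet T).Nonempty →
        (hatSet R T ∩ regSet T).Nonempty ∧ isFrac R T (hatSet R T) ∧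
          vSet R T (hatSet R T) = hatSet R T) := by

  constructor
  · apply le_antisymm
    · -- hatSet ⊆ union
      intro x hx
      obtain ⟨c, hc, hpow⟩ := hx
      set B : Set T := {t | ∃ n : ℕ, t = algebraMap R T c * x ^ n} with hB
      have hBR : B ⊆ ringSet R T := by
        rintro t ⟨n, rfl⟩
        rcases Nat.eq_zero_or_pos n with h0 | h1
        · subst h0; rw [pow_zero, mul_one]; exact ⟨c, rfl⟩
        · exact hpow n h1
      set I : Set T := vSet R T B with hI
      have hxB : ∀ i ∈ B, x * i ∈ B := by
        rintro t ⟨n, rfl⟩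
        exact ⟨n + 1, by rw [pow_succ]; ring⟩
      have hxI : ∀ i ∈ I, x * i ∈ I :=
        mul_stable_invSet' R T (mul_stable_invSet' R T hxB)
      refine ⟨colonSet T I I, ⟨I, ?_, ?_, ?_, rfl⟩, hxI⟩
      · -- regular element in I
        refine ⟨algebraMap R T c, subset_vSet' R T B ⟨0, by simp⟩, algMap_reg' R T hc⟩
      · -- fractional
        refine ⟨1, one_mem _, fun t ht => ?_⟩
        have hIR : I ⊆ ringSet R T := by
          have h1 : ringSet R T ⊆ invSet R T B := fun a ha b hb =>
            mul_mem_ringSet' R T ha (hBR hb)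
          have h2 : I ⊆ invSet R T (ringSet R T) := invSet_anti' R T h1
          rwa [invSet_ringSet'] at h2
        simpa using hIR ht
      · -- divisorial
        show invSet R T (invSet R T (vSet R T B)) = vSet R T B
        rw [invSet_vSet']; rfl
    · -- union ⊆ hatSet
      rintro a ⟨S, ⟨I, ⟨t, htI, htreg⟩, ⟨c, hc, hcI⟩, _, rfl⟩, haS⟩
      have hpow : ∀ n : ℕ, a ^ n * t ∈ I := by
        intro n
        induction n with
        | zero => simpa using htI
        | succ n ih =>
          have := haS _ ih
          rwa [show a * (a ^ n * t) = a ^ (n + 1) * t by rw [pow_succ]; ring] at this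
      have hct : algebraMap R T c * t ∈ ringSet R T := hcI t htI
      obtain ⟨c', hc'⟩ := hct
      have hc'reg : c' ∈ nonZeroDivisors R := by
        apply reg_of_image' R T
        rw [hc']
        exact mul_mem (algMap_reg' R T hc) htreg
      refine ⟨c', hc'reg, fun n _ => ?_⟩
      have : algebraMap R T c' * a ^ n = algebraMap R T c * (a ^ n * t) := by
        rw [hc']; ring
      rw [this]
      exact hcI _ (hpow n)
  · rintro ⟨d, hdinv, hdreg⟩
    have hd_mem : d ∈ ringSet R T := by
      have := hdinv 1 (one_mem_hatSet' R T)
      rwa [mul_one] at this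
    obtain ⟨c, hc⟩ := hd_mem
    have hcreg : c ∈ nonZeroDivisors R := reg_of_image' R T (hc ▸ hdreg)
    refine ⟨⟨1, one_mem_hatSet' R T, one_mem (nonZeroDivisors T)⟩, ?_, ?_⟩
    · exact ⟨c, hcreg, fun x hx => by rw [hc]; exact hdinv x hx⟩
    · apply le_antisymm
      · intro y hy
        -- y ∈ vSet hatSet; f = invSet hatSet
        set A : Set T := hatSet R T with hA
        set f : Set T := invSet R T A with hf
        have hfA : ∀ t ∈ f, ∀ b ∈ A, t * b ∈ f := by
          intro t ht b hb b' hb'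
          rw [show t * b * b' = t * (b * b') by ring]
          exact ht _ (hat_mul' R T hb hb')
        have hyf : ∀ t ∈ f, y * t ∈ f := by
          intro t ht b hb
          rw [show y * t * b = y * (t * b) by ring]
          exact hy _ (hfA t ht b hb)
        have hdf : d ∈ f := hdinv
        have hynd : ∀ n : ℕ, y ^ n * d ∈ f := by
          intro n
          induction n with
          | zero => simpa using hdf
          | succ n ih =>
            have := hyf _ ih
            rwa [show y * (y ^ n * d) = y ^ (n + 1) * d by rw [pow_succ]; ring] at this
        refine ⟨c, hcreg, fun n _ => ?_⟩
        have h1 : y ^ n * d ∈ ringSet R T := by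
          have := (hynd n) 1 (one_mem_hatSet' R T)
          rwa [mul_one] at this
        rwa [hc, mul_comm]
      · exact subset_vSet' R T (hatSet R T)
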